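/- arXiv:2503.10576 — 3 statements merged into one kernel-verified Lean document; each statement's English description precedes it below -/
import Mathlib

section
/- For Σ symmetric positive definite, the unique symmetric positive definite matrix Δ solving Δ = Δ^{-1/2}(Δ^{1/2} Σ Δ^{1/2})^{1/2} Δ^{-1/2} is Δ = Σ^{1/3}. -/
open Matrix

/-- For `Σ` symmetric positive definite, the unique symmetric positive
definite matrix `Δ` solving `Δ = Δ^{-1/2} (Δ^{1/2} Σ Δ^{1/2})^{1/2} Δ^{-1/2}` is
`Δ = Σ^{1/3}`.  Here `Δs` denotes the unique positive definite square root of `Δ` and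
`S` the unique positive definite square root of `Δs * Σ * Δs`, so the statement reads:
`Δ = Δs⁻¹ * S * Δs⁻¹` if and only if `Δ ^ 3 = Σ` (i.e. `Δ` is the positive definite
cube root `Σ^{1/3}` of `Σ`). -/
theorem fixed_point_eq_cbrt (d : ℕ) (Sig Delta Ds S : Matrix (Fin d) (Fin d) ℝ)
    (hSig : Sig.PosDef) (hDelta : Delta.PosDef)
    (hDs : Ds.PosDef) (hDs2 : Ds * Ds = Delta)
    (hS : S.PosDef) (hS2 : S * S = Ds * Sig * Ds) :
    Delta = Ds⁻¹ * S * Ds⁻¹ ↔ Delta ^ 3 = Sig := by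
  have hdet : IsUnit Ds.det := isUnit_iff_ne_zero.mpr (ne_of_gt hDs.det_pos)
  have hinv : Ds⁻¹ * Ds = 1 := Matrix.nonsing_inv_mul Ds hdet
  have hinv' : Ds * Ds⁻¹ = 1 := Matrix.mul_nonsing_inv Ds hdet
  constructor
  · intro h
    have hSeq : S = Ds * Delta * Ds := by
      rw [h]
      simp only [Matrix.mul_assoc, hinv, Matrix.mul_one]
      rw [← Matrix.mul_assoc, hinv', Matrix.one_mul]
    have key : Ds * Sig * Ds = Ds * (Delta ^ 3) * Ds := by
      rw [← hS2, hSeq, ← hDs2]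
      simp only [pow_succ, pow_zero, Matrix.one_mul, Matrix.mul_assoc]
    have h2 : Sig = Delta ^ 3 := by
      calc Sig = Ds⁻¹ * (Ds * Sig * Ds) * Ds⁻¹ := by
            simp only [Matrix.mul_assoc, hinv', Matrix.mul_one]
            rw [← Matrix.mul_assoc, hinv, Matrix.one_mul]
        _ = Ds⁻¹ * (Ds * Delta ^ 3 * Ds) * Ds⁻¹ := by rw [key]
        _ = Delta ^ 3 := by
            simp only [Matrix.mul_assoc, hinv', Matrix.mul_one]
            rw [← Matrix.mul_assoc, hinv, Matrix.one_mul]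
    exact h2.symm
  · intro h
    have hSeq : S = Ds ^ 4 := by
      open scoped MatrixOrder in
      apply (CFC.sq_eq_sq_iff (A := Matrix (Fin d) (Fin d) ℝ) S (Ds ^ 4) (Matrix.nonneg_iff_posSemidef.mpr hS.posSemidef) (Matrix.nonneg_iff_posSemidef.mpr (hDs.posSemidef.pow 4))).mp
      rw [sq, hS2, ← h, ← hDs2]
      simp only [pow_succ, pow_zero, Matrix.one_mul, Matrix.mul_assoc]
    rw [hSeq, ← hDs2]
    calc Ds * Ds = (Ds⁻¹ * Ds) * (Ds * (Ds * (Ds * Ds⁻¹))) := by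
          rw [hinv, hinv', Matrix.mul_one, Matrix.one_mul]
      _ = Ds⁻¹ * Ds ^ 4 * Ds⁻¹ := by
          simp only [pow_succ, pow_zero, Matrix.one_mul, Matrix.mul_assoc]
end

section
/- The optimal transport (Monge) map for the quadratic cost between two nondegenerate Gaussians N(m_A, Σ_A) and N(m_B, Σ_B) on ℝ^d is T(x) = m_B + M(x − m_A) with M = Σ_A^{-1/2}(Σ_A^{1/2} Σ_B Σ_A^{1/2})^{1/2} Σ_A^{-1/2}; in particular T ♯ N(m_A, Σ_A) = N(m_B, Σ_B) and T is the gradient of a convex function. -/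
open MeasureTheory Matrix RealInnerProductSpace ENNReal

/-- The Gaussian measure `N(m, Σ)` on `ℝ^d` (as a Euclidean space), given by its density
with respect to Lebesgue measure. -/
noncomputable def gaussianMeasureE (d : ℕ) (m : EuclideanSpace ℝ (Fin d))
    (S : Matrix (Fin d) (Fin d) ℝ) : Measure (EuclideanSpace ℝ (Fin d)) :=
  volume.withDensity fun x => ENNReal.ofReal
    ((Real.sqrt ((2 * Real.pi) ^ d * S.det))⁻¹ *
      Real.exp (-(1 / 2) * ⟪x - m, Matrix.toEuclideanLin S⁻¹ (x - m)⟫))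

section aux

variable {d : ℕ}

lemma auxEL_mul_apply (A B : Matrix (Fin d) (Fin d) ℝ) (x : EuclideanSpace ℝ (Fin d)) :
    Matrix.toEuclideanLin (A * B) x = Matrix.toEuclideanLin A (Matrix.toEuclideanLin B x) := by
  simp [Matrix.toEuclideanLin_apply, Matrix.mulVec_mulVec]

lemma auxEL_one (x : EuclideanSpace ℝ (Fin d)) :
    Matrix.toEuclideanLin (1 : Matrix (Fin d) (Fin d) ℝ) x = x := by
  simp [Matrix.toEuclideanLin_apply, Matrix.one_mulVec]

lemma auxEL_symm (A : Matrix (Fin d) (Fin d) ℝ) (hA : Aᴴ = A)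
    (u v : EuclideanSpace ℝ (Fin d)) :
    ⟪Matrix.toEuclideanLin A u, v⟫ = ⟪u, Matrix.toEuclideanLin A v⟫ := by
  conv_lhs => rw [← hA]
  rw [Matrix.toEuclideanLin_conjTranspose_eq_adjoint, LinearMap.adjoint_inner_left]

lemma auxEL_nonneg (A : Matrix (Fin d) (Fin d) ℝ) (hA : A.PosSemidef)
    (u : EuclideanSpace ℝ (Fin d)) : 0 ≤ ⟪u, Matrix.toEuclideanLin A u⟫ := by
  simpa [EuclideanSpace.inner_eq_star_dotProduct, dotProduct_comm] using hA.dotProduct_mulVec_nonneg ((WithLp.equiv 2 (Fin d → ℝ)) u)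

lemma auxGrad (Lc : EuclideanSpace ℝ (Fin d) →L[ℝ] EuclideanSpace ℝ (Fin d))
    (hsym : ∀ u v, ⟪Lc u, v⟫ = ⟪u, Lc v⟫) (mA mB x : EuclideanSpace ℝ (Fin d)) :
    HasGradientAt (fun y => (1/2 : ℝ) * ⟪y - mA, Lc (y - mA)⟫ + ⟪mB, y⟫)
      (mB + Lc (x - mA)) x := by
  rw [hasGradientAt_iff_hasFDerivAt]
  have hg : HasFDerivAt (fun y : EuclideanSpace ℝ (Fin d) => y - mA)
      (ContinuousLinearMap.id ℝ _) x := (hasFDerivAt_id x).sub_const mA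
  have h1 := (hg.inner (𝕜 := ℝ) (Lc.hasFDerivAt.comp x hg)).const_mul (1/2 : ℝ)
  have h2 : HasFDerivAt (fun y : EuclideanSpace ℝ (Fin d) => ⟪mB, y⟫)
      (innerSL ℝ mB) x := (innerSL ℝ mB).hasFDerivAt
  have h3 := h1.add h2
  refine h3.congr_fderiv ?_
  refine ContinuousLinearMap.ext fun y => ?_
  simp only [InnerProductSpace.toDual_apply_apply, ContinuousLinearMap.add_apply,
    ContinuousLinearMap.coe_smul', Pi.smul_apply, ContinuousLinearMap.comp_apply,
    ContinuousLinearMap.prod_apply, fderivInnerCLM_apply, ContinuousLinearMap.id_apply,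
    innerSL_apply_apply, inner_add_left, smul_eq_mul, Function.comp]
  have e1 := hsym (x - mA) y
  have e2 := real_inner_comm y (Lc (x - mA))
  linarith

lemma auxQuadSub (Lc : EuclideanSpace ℝ (Fin d) →L[ℝ] EuclideanSpace ℝ (Fin d))
    (u v : EuclideanSpace ℝ (Fin d)) :
    ⟪u - v, Lc (u - v)⟫ = ⟪u, Lc u⟫ - ⟪u, Lc v⟫ - ⟪v, Lc u⟫ + ⟪v, Lc v⟫ := by
  simp only [map_sub, inner_sub_left, inner_sub_right]; ring

lemma auxQuadAdd (Lc : EuclideanSpace ℝ (Fin d) →L[ℝ] EuclideanSpace ℝ (Fin d))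
    (t s : ℝ) (u v : EuclideanSpace ℝ (Fin d)) :
    ⟪t • u + s • v, Lc (t • u + s • v)⟫
      = t*t*⟪u, Lc u⟫ + t*s*⟪u, Lc v⟫ + s*t*⟪v, Lc u⟫ + s*s*⟪v, Lc v⟫ := by
  simp only [map_add, _root_.map_smul, inner_add_left, inner_add_right,
    real_inner_smul_left, real_inner_smul_right]; ring

lemma auxConvex (Lc : EuclideanSpace ℝ (Fin d) →L[ℝ] EuclideanSpace ℝ (Fin d))
    (hsym : ∀ u v, ⟪Lc u, v⟫ = ⟪u, Lc v⟫)
    (hpos : ∀ u, 0 ≤ ⟪u, Lc u⟫) (mA mB : EuclideanSpace ℝ (Fin d)) :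
    ConvexOn ℝ Set.univ (fun y => (1/2 : ℝ) * ⟪y - mA, Lc (y - mA)⟫ + ⟪mB, y⟫) := by
  refine ⟨convex_univ, fun a _ b _ t s ht hs hts => ?_⟩
  have key : t • a + s • b - mA = t • (a - mA) + s • (b - mA) := by
    calc t • a + s • b - mA = t • a + s • b - (t + s) • mA := by rw [hts, one_smul]
      _ = t • (a - mA) + s • (b - mA) := by rw [add_smul, smul_sub, smul_sub]; abel
  have hvu : ⟪b - mA, Lc (a - mA)⟫ = ⟪a - mA, Lc (b - mA)⟫ := by
    rw [← hsym (a - mA) (b - mA)]; exact real_inner_comm _ _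
  have h0 := hpos ((a - mA) - (b - mA))
  rw [auxQuadSub, hvu] at h0
  have hlin : ⟪mB, t • a + s • b⟫ = t * ⟪mB, a⟫ + s * ⟪mB, b⟫ := by
    simp only [inner_add_right, real_inner_smul_right]
  dsimp only
  rw [key, auxQuadAdd, hvu, hlin, smul_eq_mul, smul_eq_mul]
  have hs1 : s = 1 - t := by linarith
  subst hs1
  nlinarith [mul_nonneg (mul_nonneg ht hs) h0]

lemma auxMapWithDensity {α β : Type*} [MeasurableSpace α] [MeasurableSpace β]
    (μ : Measure α) (e : α ≃ᵐ β) {f : α → ℝ≥0∞} (hf : Measurable f) :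
    (μ.withDensity f).map e = (μ.map e).withDensity (fun y => f (e.symm y)) := by
  ext s hs
  rw [Measure.map_apply e.measurable hs, withDensity_apply _ (e.measurable hs),
    withDensity_apply _ hs,
    setLIntegral_map (f := fun y => f (e.symm y)) hs (hf.comp e.symm.measurable) e.measurable]
  simp

lemma auxDensityMeasurable (m : EuclideanSpace ℝ (Fin d)) (Si : Matrix (Fin d) (Fin d) ℝ)
    (c : ℝ) :
    Measurable fun x : EuclideanSpace ℝ (Fin d) => ENNReal.ofReal
      (c * Real.exp (-(1 / 2) * ⟪x - m, Matrix.toEuclideanLin Si (x - m)⟫)) := by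
  have hL : Continuous (Matrix.toEuclideanLin Si) := LinearMap.continuous_of_finiteDimensional _
  have h1 : Continuous fun x : EuclideanSpace ℝ (Fin d) =>
      ⟪x - m, Matrix.toEuclideanLin Si (x - m)⟫ :=
    continuous_inner.comp ((continuous_id.sub continuous_const).prodMk
      (hL.comp (continuous_id.sub continuous_const)))
  exact (ENNReal.continuous_ofReal.comp
    (continuous_const.mul (Real.continuous_exp.comp (continuous_const.mul h1)))).measurable

end aux

/-- The optimal transport (Monge) map for the quadratic cost between two
nondegenerate Gaussians `N(m_A, Σ_A)` and `N(m_B, Σ_B)` is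
`T(x) = m_B + M (x − m_A)` with `M = Σ_A^{-1/2} (Σ_A^{1/2} Σ_B Σ_A^{1/2})^{1/2} Σ_A^{-1/2}`:
`T` pushes `N(m_A, Σ_A)` forward to `N(m_B, Σ_B)` and `T` is the gradient of a convex
function.  Here `sA` is the positive definite square root of `Σ_A` and `S` the positive
definite square root of `sA * Σ_B * sA`, so that `M = sA⁻¹ * S * sA⁻¹`. -/
theorem ot_map_between_gaussians (d : ℕ) (mA mB : EuclideanSpace ℝ (Fin d))
    (SigA SigB sA S : Matrix (Fin d) (Fin d) ℝ)
    (hA : SigA.PosDef) (hB : SigB.PosDef)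
    (hsA : sA.PosDef) (hsA2 : sA * sA = SigA)
    (hS : S.PosDef) (hS2 : S * S = sA * SigB * sA) :
    letI M : Matrix (Fin d) (Fin d) ℝ := sA⁻¹ * S * sA⁻¹
    letI T : EuclideanSpace ℝ (Fin d) → EuclideanSpace ℝ (Fin d) :=
      fun x => mB + Matrix.toEuclideanLin M (x - mA)
    Measure.map T (gaussianMeasureE d mA SigA) = gaussianMeasureE d mB SigB ∧
      ∃ φ : EuclideanSpace ℝ (Fin d) → ℝ,
        ConvexOn ℝ Set.univ φ ∧ ∀ x, HasGradientAt φ (T x) x := by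
  set M : Matrix (Fin d) (Fin d) ℝ := sA⁻¹ * S * sA⁻¹ with hMdef
  clear_value M
  have hdA := hA.det_pos
  have hdsA := hsA.det_pos
  have hdS := hS.det_pos
  have husA : IsUnit sA.det := isUnit_iff_ne_zero.mpr hdsA.ne'
  have h1 : sA * sA⁻¹ = 1 := Matrix.mul_nonsing_inv _ husA
  have h2 : sA⁻¹ * sA = 1 := Matrix.nonsing_inv_mul _ husA
  have hsAinvH : (sA⁻¹)ᴴ = sA⁻¹ := hsA.isHermitian.inv
  have hMherm : Mᴴ = M := by
    rw [hMdef, Matrix.conjTranspose_mul, Matrix.conjTranspose_mul, hsAinvH,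
      hS.isHermitian.eq, Matrix.mul_assoc]
  have hMpos : M.PosSemidef := by
    have h := hS.posSemidef.mul_mul_conjTranspose_same sA⁻¹
    rw [hsAinvH] at h
    rwa [hMdef]
  have hMSAM : M * SigA * M = SigB := by
    rw [hMdef, ← hsA2]
    have e1 : sA⁻¹ * S * sA⁻¹ * (sA * sA) * (sA⁻¹ * S * sA⁻¹)
        = sA⁻¹ * ((S * (sA⁻¹ * sA)) * ((sA * sA⁻¹) * S)) * sA⁻¹ := by
      simp only [Matrix.mul_assoc]
    rw [e1, h2, h1, Matrix.mul_one, Matrix.one_mul, hS2]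
    have e2 : sA⁻¹ * (sA * SigB * sA) * sA⁻¹ = sA⁻¹ * sA * (SigB * (sA * sA⁻¹)) := by
      simp only [Matrix.mul_assoc]
    rw [e2, h2, h1, Matrix.one_mul, Matrix.mul_one]
  have hdM : 0 < M.det := by
    rw [hMdef]
    simp only [Matrix.det_mul, Matrix.det_nonsing_inv]
    exact mul_pos (mul_pos (by simpa using inv_pos.mpr hdsA) hdS) (by simpa using inv_pos.mpr hdsA)
  have hdetB : SigB.det = M.det ^ 2 * SigA.det := by
    rw [← hMSAM]; simp only [Matrix.det_mul]; ring
  have hMinvH : (M⁻¹)ᴴ = M⁻¹ := Matrix.IsHermitian.inv hMherm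
  have hBinv : M⁻¹ * SigA⁻¹ * M⁻¹ = SigB⁻¹ := by
    conv_rhs => rw [← hMSAM, Matrix.mul_inv_rev, Matrix.mul_inv_rev, ← Matrix.mul_assoc]
  have hMu : IsUnit M.det := isUnit_iff_ne_zero.mpr hdM.ne'
  have hM1 : M * M⁻¹ = 1 := Matrix.mul_nonsing_inv _ hMu
  have hM2 : M⁻¹ * M = 1 := Matrix.nonsing_inv_mul _ hMu
  have hLdet : LinearMap.det (Matrix.toEuclideanLin M) = M.det := by
    rw [Matrix.toEuclideanLin_eq_toLin]; exact LinearMap.det_toLin _ M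
  -- the affine measurable equivalence
  let Le : EuclideanSpace ℝ (Fin d) ≃ₗ[ℝ] EuclideanSpace ℝ (Fin d) :=
    LinearEquiv.ofLinear (Matrix.toEuclideanLin M) (Matrix.toEuclideanLin M⁻¹)
      (LinearMap.ext fun x => by
        rw [LinearMap.comp_apply, ← auxEL_mul_apply, hM1, auxEL_one, LinearMap.id_apply])
      (LinearMap.ext fun x => by
        rw [LinearMap.comp_apply, ← auxEL_mul_apply, hM2, auxEL_one, LinearMap.id_apply])
  let e : EuclideanSpace ℝ (Fin d) ≃ᵐ EuclideanSpace ℝ (Fin d) :=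
    (((Homeomorph.subRight mA).trans Le.toContinuousLinearEquiv.toHomeomorph).trans
      (Homeomorph.addLeft mB)).toMeasurableEquiv
  have hTe : (fun x => mB + Matrix.toEuclideanLin M (x - mA)) = ⇑e := rfl
  have hesymm : ∀ y, e.symm y = Matrix.toEuclideanLin M⁻¹ (y - mB) + mA := by
    intro y
    apply e.injective
    rw [MeasurableEquiv.apply_symm_apply]
    show y = mB + Matrix.toEuclideanLin M (Matrix.toEuclideanLin M⁻¹ (y - mB) + mA - mA)
    rw [add_sub_cancel_right, ← auxEL_mul_apply, hM1, auxEL_one]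
    abel
  constructor
  · rw [hTe]
    unfold gaussianMeasureE
    rw [auxMapWithDensity _ e (auxDensityMeasurable mA SigA⁻¹ _)]
    have hmapvol : Measure.map (⇑e) (volume : Measure (EuclideanSpace ℝ (Fin d)))
        = ENNReal.ofReal |(M.det)⁻¹| • volume := by
      have hcomp : ⇑e = (fun z : EuclideanSpace ℝ (Fin d) => mB + z) ∘
          (⇑(Matrix.toEuclideanLin M)) ∘ (fun x => x - mA) := rfl
      have hmf : Measurable fun x : EuclideanSpace ℝ (Fin d) => x - mA :=
        (continuous_id.sub continuous_const).measurable
      have hmg : Measurable (⇑(Matrix.toEuclideanLin M)) :=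
        (LinearMap.continuous_of_finiteDimensional _).measurable
      have hmh : Measurable fun z : EuclideanSpace ℝ (Fin d) => mB + z :=
        (continuous_const.add continuous_id).measurable
      rw [hcomp, ← Measure.map_map hmh (hmg.comp hmf), ← Measure.map_map hmg hmf]
      rw [show (fun x : EuclideanSpace ℝ (Fin d) => x - mA)
            = (fun x => x + (-mA)) by funext x; rw [sub_eq_add_neg]]
      rw [map_add_right_eq_self volume (-mA),
        Measure.map_linearMap_addHaar_eq_smul_addHaar volume (by rw [hLdet]; exact hdM.ne'),
        hLdet, Measure.map_smul]
      rw [show (fun z : EuclideanSpace ℝ (Fin d) => mB + z) = (fun z => mB + z) from rfl,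
        map_add_left_eq_self volume mB]
    rw [hmapvol, withDensity_smul_measure,
      ← withDensity_smul' _ _ ENNReal.ofReal_ne_top]
    congr 1
    funext y
    rw [Pi.smul_apply, smul_eq_mul, ← ENNReal.ofReal_mul (abs_nonneg _)]
    congr 1
    have hx : e.symm y - mA = Matrix.toEuclideanLin M⁻¹ (y - mB) := by
      rw [hesymm y, add_sub_cancel_right]
    rw [hx]
    have hquad : ⟪Matrix.toEuclideanLin M⁻¹ (y - mB),
        Matrix.toEuclideanLin SigA⁻¹ (Matrix.toEuclideanLin M⁻¹ (y - mB))⟫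
        = ⟪y - mB, Matrix.toEuclideanLin SigB⁻¹ (y - mB)⟫ := by
      rw [auxEL_symm _ hMinvH, ← auxEL_mul_apply, ← auxEL_mul_apply, hBinv]
    rw [hquad, ← mul_assoc]
    congr 1
    rw [abs_of_pos (inv_pos.mpr hdM)]
    have hsqrt : Real.sqrt ((2*Real.pi)^d * SigB.det)
        = M.det * Real.sqrt ((2*Real.pi)^d * SigA.det) := by
      rw [hdetB,
        show (2*Real.pi)^d * (M.det^2 * SigA.det) = (M.det)^2 * ((2*Real.pi)^d * SigA.det) by
          ring,
        Real.sqrt_mul (sq_nonneg _), Real.sqrt_sq hdM.le]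
    rw [hsqrt, mul_inv, mul_comm]
  · -- convex potential
    let Lc : EuclideanSpace ℝ (Fin d) →L[ℝ] EuclideanSpace ℝ (Fin d) :=
      LinearMap.toContinuousLinearMap (Matrix.toEuclideanLin M)
    have hsym : ∀ u v, ⟪Lc u, v⟫ = ⟪u, Lc v⟫ := fun u v => auxEL_symm M hMherm u v
    have hpos : ∀ u, 0 ≤ ⟪u, Lc u⟫ := fun u => auxEL_nonneg M hMpos u
    refine ⟨fun y => (1/2 : ℝ) * ⟪y - mA, Lc (y - mA)⟫ + ⟪mB, y⟫,
      auxConvex Lc hsym hpos mA mB, fun x => ?_⟩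
    exact auxGrad Lc hsym mA mB x
end

section
/- Let μ and ν be probability measures on ℝ with μ atomless. Then the map T = C_ν^{-1} ∘ C_μ pushes μ forward to ν, where C_μ is the cumulative distribution function of μ and C_ν^{-1}(r) = inf{x : C_ν(x) ≥ r} is the quantile function of ν. -/
open MeasureTheory

/-- The cumulative distribution function of a measure on `ℝ`: `C_μ(x) = μ((-∞, x])`. -/
noncomputable def cdfOf (μ : Measure ℝ) (x : ℝ) : ℝ := (μ (Set.Iic x)).toReal

/-- The quantile (generalized inverse) function: `C_ν⁻¹(r) = inf {x : C_ν(x) ≥ r}`. -/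
noncomputable def quantileOf (ν : Measure ℝ) (r : ℝ) : ℝ := sInf {x : ℝ | r ≤ cdfOf ν x}

section Aux

open Set Filter ProbabilityTheory
open scoped Topology

lemma cdfOf_eq (ν : Measure ℝ) [IsProbabilityMeasure ν] : cdfOf ν = ⇑(cdf ν) :=
  funext fun x => (cdf_eq_real ν x).symm

/-- Right-continuity consequence for the cdf. -/
lemma le_cdf_of_forall_lt (ν : Measure ℝ) {r a : ℝ} (h : ∀ b, a < b → r ≤ cdf ν b) :
    r ≤ cdf ν a := by
  have ht : Filter.Tendsto (cdf ν) (𝓝[>] a) (𝓝 (cdf ν a)) :=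
    ((cdf ν).right_continuous a).tendsto.mono_left (nhdsWithin_mono a Ioi_subset_Ici_self)
  exact ge_of_tendsto ht (eventually_nhdsWithin_of_forall fun b hb => h b hb)

lemma bddBelow_quantile_set (ν : Measure ℝ) [IsProbabilityMeasure ν] {r : ℝ} (hr : 0 < r) :
    BddBelow {x : ℝ | r ≤ cdf ν x} := by
  obtain ⟨x₀, hx₀⟩ := ((tendsto_cdf_atBot ν).eventually_lt_const hr).exists
  refine ⟨x₀, fun y hy => ?_⟩
  by_contra hlt
  push_neg at hlt
  exact absurd (hy.trans (monotone_cdf ν hlt.le)) (not_le.2 hx₀)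

lemma nonempty_quantile_set (ν : Measure ℝ) [IsProbabilityMeasure ν] {r : ℝ} (hr : r < 1) :
    {x : ℝ | r ≤ cdf ν x}.Nonempty := by
  obtain ⟨x, hx⟩ := ((tendsto_cdf_atTop ν).eventually_const_lt hr).exists
  exact ⟨x, hx.le⟩

/-- The Galois property of the quantile function. -/
lemma quantile_le_iff (ν : Measure ℝ) [IsProbabilityMeasure ν] {r : ℝ}
    (hr0 : 0 < r) (hr1 : r < 1) (a : ℝ) :
    quantileOf ν r ≤ a ↔ r ≤ cdf ν a := by
  have hq : quantileOf ν r = sInf {x : ℝ | r ≤ cdf ν x} := by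
    simp only [quantileOf, cdfOf_eq ν]
  rw [hq]
  constructor
  · intro h
    refine le_cdf_of_forall_lt ν fun b hb => ?_
    obtain ⟨s, hs, hsb⟩ := exists_lt_of_csInf_lt (nonempty_quantile_set ν hr1) (h.trans_lt hb)
    exact hs.trans (monotone_cdf ν hsb.le)
  · intro h
    exact csInf_le (bddBelow_quantile_set ν hr0) h

/-- The cdf of an atomless probability measure is "uniformly distributed". -/
lemma measure_cdf_le_eq (μ : Measure ℝ) [IsProbabilityMeasure μ] [NullSingletonClass μ] {t : ℝ}
    (ht0 : 0 ≤ t) (ht1 : t ≤ 1) :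
    μ {x : ℝ | cdf μ x ≤ t} = ENNReal.ofReal t := by
  set S : Set ℝ := {x : ℝ | cdf μ x ≤ t} with hS
  by_cases hne : S.Nonempty
  · by_cases hbd : ∃ x, t < cdf μ x
    · obtain ⟨x₀, hx₀⟩ := hbd
      have hub : x₀ ∈ upperBounds S := by
        intro y hy
        by_contra hlt
        push_neg at hlt
        exact absurd ((monotone_cdf μ hlt.le).trans hy) (not_le.2 hx₀)
      have hbdd : BddAbove S := ⟨x₀, hub⟩
      set c : ℝ := sSup S with hc
      have hIio_sub : Iio c ⊆ S := by
        intro x hx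
        obtain ⟨y, hy, hxy⟩ := exists_lt_of_lt_csSup hne hx
        exact (monotone_cdf μ hxy.le).trans hy
      have hsub_Iic : S ⊆ Iic c := fun y hy => le_csSup hbdd hy
      have hGc : t ≤ cdf μ c := by
        refine le_cdf_of_forall_lt μ fun b hb => ?_
        by_contra hlt
        push_neg at hlt
        exact absurd (hsub_Iic hlt.le) (not_le.2 hb)
      have hIic : μ (Iic c) = ENNReal.ofReal (cdf μ c) := (ofReal_cdf μ c).symm
      have hIio_eq : μ (Iio c) = μ (Iic c) :=
        measure_congr (Iio_ae_eq_Iic' (measure_singleton c))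
      -- bound μ (Iio c) from above by ofReal t
      have hIio_le : μ (Iio c) ≤ ENNReal.ofReal t := by
        have huni : (⋃ n : ℕ, Iic (c - 1 / (n + 1))) = Iio c := by
          refine Subset.antisymm (iUnion_subset fun n x hx => ?_) (fun x hx => ?_)
          · simp only [mem_Iic] at hx
            have h0 : (0 : ℝ) < 1 / (n + 1) := by positivity
            simp only [mem_Iio]
            linarith
          · have hx' : x < c := hx
            obtain ⟨n, hn⟩ := exists_nat_one_div_lt (K := ℝ) (sub_pos.2 hx')
            exact mem_iUnion.2 ⟨n, by simp only [mem_Iic]; linarith⟩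
        have hmono : Monotone fun n : ℕ => Iic (c - 1 / (n + 1 : ℝ)) := by
          intro m n hmn
          refine Iic_subset_Iic.2 (sub_le_sub_left ?_ c)
          apply one_div_le_one_div_of_le (by positivity)
          exact_mod_cast Nat.add_le_add_right hmn 1
        have htend := tendsto_measure_iUnion_atTop (μ := μ) hmono
        rw [huni] at htend
        refine le_of_tendsto' htend fun n => ?_
        have hmem : c - 1 / (n + 1 : ℝ) ∈ Iio c := by
          have : (0 : ℝ) < 1 / (n + 1) := by positivity
          simp only [mem_Iio]; linarith
        have : cdf μ (c - 1 / (n + 1 : ℝ)) ≤ t := hIio_sub hmem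
        calc μ (Iic (c - 1 / (n + 1 : ℝ))) = ENNReal.ofReal (cdf μ (c - 1 / (n + 1 : ℝ))) :=
              (ofReal_cdf μ _).symm
          _ ≤ ENNReal.ofReal t := ENNReal.ofReal_le_ofReal this
      have hIic_eq : μ (Iic c) = ENNReal.ofReal t := by
        refine le_antisymm ?_ ?_
        · rw [← hIio_eq]; exact hIio_le
        · rw [hIic]; exact ENNReal.ofReal_le_ofReal hGc
      refine le_antisymm ?_ ?_
      · calc μ S ≤ μ (Iic c) := measure_mono hsub_Iic
          _ = ENNReal.ofReal t := hIic_eq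
      · calc ENNReal.ofReal t = μ (Iio c) := by rw [hIio_eq, hIic_eq]
          _ ≤ μ S := measure_mono hIio_sub
    · -- cdf ≤ t everywhere, so S = univ and t = 1
      push_neg at hbd
      have hSuniv : S = univ := eq_univ_of_forall fun x => hbd x
      have h1t : (1 : ℝ) ≤ t := le_of_tendsto (tendsto_cdf_atTop μ)
        (Filter.Eventually.of_forall hbd)
      have ht : t = 1 := le_antisymm ht1 h1t
      rw [hSuniv, ht]
      simp
  · -- S empty, so t = 0
    rw [not_nonempty_iff_eq_empty] at hne
    have ht : t ≤ 0 := by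
      by_contra hpos
      push_neg at hpos
      obtain ⟨x, hx⟩ := ((tendsto_cdf_atBot μ).eventually_lt_const hpos).exists
      have hxS : x ∈ S := le_of_lt hx
      rw [hne] at hxS
      exact hxS
    have : t = 0 := le_antisymm ht ht0
    rw [hne, this]
    simp

/-- a.e. the cdf of an atomless measure lies strictly inside (0,1). -/
lemma measure_cdf_extreme (μ : Measure ℝ) [IsProbabilityMeasure μ] [NullSingletonClass μ] :
    μ {x : ℝ | ¬(0 < cdf μ x ∧ cdf μ x < 1)} = 0 := by
  have hsub : {x : ℝ | ¬(0 < cdf μ x ∧ cdf μ x < 1)} ⊆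
      {x : ℝ | cdf μ x ≤ 0} ∪ {x : ℝ | 1 ≤ cdf μ x} := by
    intro x hx
    simp only [Set.mem_setOf_eq, not_and_or, not_lt] at hx
    rcases hx with h | h
    · exact Or.inl h
    · exact Or.inr h
  refine measure_mono_null hsub (measure_union_null ?_ ?_)
  · have := measure_cdf_le_eq μ (le_refl (0:ℝ)) zero_le_one
    simpa using this
  · set B : Set ℝ := {x : ℝ | 1 ≤ cdf μ x} with hB
    by_cases hne : B.Nonempty
    · have hbdd : BddBelow B := by
        obtain ⟨x₀, hx₀⟩ := ((tendsto_cdf_atBot μ).eventually_lt_const one_pos).exists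
        refine ⟨x₀, fun y hy => ?_⟩
        by_contra hlt
        push_neg at hlt
        exact absurd (hy.trans (monotone_cdf μ hlt.le)) (not_le.2 hx₀)
      set c : ℝ := sInf B with hc
      have hGc : (1 : ℝ) ≤ cdf μ c := by
        refine le_cdf_of_forall_lt μ fun b hb => ?_
        obtain ⟨y, hy, hyb⟩ := exists_lt_of_csInf_lt hne hb
        exact hy.trans (monotone_cdf μ hyb.le)
      have hIic : μ (Set.Iic c) = 1 := by
        have h1 : cdf μ c = 1 := le_antisymm (cdf_le_one μ c) hGc
        rw [← ofReal_cdf μ c, h1]; simp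
      have hIoi : μ (Set.Ioi c) = 0 := by
        have := measure_compl (measurableSet_Iic (a := c)) (measure_ne_top μ _)
        rw [Set.compl_Iic] at this
        rw [this, hIic]
        simp
      have hIci : μ (Set.Ici c) = 0 := by
        rw [← measure_congr (Ioi_ae_eq_Ici' (measure_singleton c))]
        exact hIoi
      refine measure_mono_null (fun y hy => ?_) hIci
      exact csInf_le hbdd hy
    · rw [not_nonempty_iff_eq_empty] at hne
      rw [hne]; simp

end Aux

/-- Let `μ` and `ν` be probability measures on `ℝ` with `μ` atomless.
Then `T = C_ν⁻¹ ∘ C_μ` pushes `μ` forward to `ν`. -/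
theorem quantile_cdf_pushforward (μ ν : Measure ℝ)
    [IsProbabilityMeasure μ] [IsProbabilityMeasure ν] [NullSingletonClass μ] :
    Measure.map (fun x => quantileOf ν (cdfOf μ x)) μ = ν := by
  classical
  open Set Filter ProbabilityTheory in
  set T : ℝ → ℝ := fun x => quantileOf ν (cdfOf μ x) with hT
  set A : Set ℝ := {x : ℝ | 0 < cdf μ x ∧ cdf μ x < 1} with hA
  have hAc : μ Aᶜ = 0 := measure_cdf_extreme μ
  have hAae : ∀ᵐ x ∂μ, x ∈ A := by
    rw [MeasureTheory.ae_iff]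
    exact hAc
  have hFμ : Measurable (cdf μ) := (monotone_cdf μ).measurable
  have hAmeas : MeasurableSet A := by
    have : A = cdf μ ⁻¹' Set.Ioo 0 1 := by
      ext x; simp [hA, Set.mem_Ioo]
    rw [this]
    exact hFμ measurableSet_Ioo
  set T' : ℝ → ℝ := A.indicator T with hT'
  -- key pointwise description on A
  have hkey : ∀ a : ℝ, ∀ x ∈ A, (T x ≤ a ↔ cdf μ x ≤ cdf ν a) := by
    intro a x hx
    have := quantile_le_iff ν hx.1 hx.2 a
    simpa [hT, cdfOf_eq μ] using this
  have hpre : ∀ a : ℝ, T' ⁻¹' Set.Iic a =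
      (A ∩ {x : ℝ | cdf μ x ≤ cdf ν a}) ∪ (Aᶜ ∩ {x : ℝ | (0:ℝ) ≤ a}) := by
    intro a
    ext x
    by_cases hx : x ∈ A
    · simp only [Set.mem_preimage, Set.mem_Iic, hT', Set.indicator_of_mem hx,
        Set.mem_union, Set.mem_inter_iff, Set.mem_compl_iff, hx, Set.mem_setOf_eq,
        not_true_eq_false, false_and, or_false, true_and]
      exact hkey a x hx
    · simp only [Set.mem_preimage, Set.mem_Iic, hT', Set.indicator_of_notMem hx,
        Set.mem_union, Set.mem_inter_iff, Set.mem_compl_iff, hx, Set.mem_setOf_eq,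
        false_and, false_or, not_false_eq_true, true_and]
  have hT'meas : Measurable T' := by
    refine measurable_of_Iic fun a => ?_
    rw [hpre a]
    exact (hAmeas.inter (hFμ measurableSet_Iic)).union
      (hAmeas.compl.inter (MeasurableSet.const _))
  have hae : T =ᵐ[μ] T' := by
    filter_upwards [hAae] with x hx
    simp [hT', Set.indicator_of_mem hx]
  rw [Measure.map_congr hae]
  refine Measure.ext_of_Iic (Measure.map T' μ) ν fun a => ?_
  rw [Measure.map_apply hT'meas measurableSet_Iic]
  have haeq : T' ⁻¹' Set.Iic a =ᵐ[μ] {x : ℝ | cdf μ x ≤ cdf ν a} := by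
    rw [Filter.eventuallyEq_set]
    filter_upwards [hAae] with x hx
    rw [hpre a]
    simp [hx, Set.mem_setOf_eq]
  rw [measure_congr haeq, measure_cdf_le_eq μ (cdf_nonneg ν a) (cdf_le_one ν a),
    ofReal_cdf ν a]
end
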